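/- Let N ≥ 1 be a power of two, R = ℤ[X]/(X^N + 1), and let p, q ≥ 1 be integers and n ≥ 1. Let sk, sk'_0, …, sk'_{n−1}, m_0, …, m_{n−1} ∈ R, let α_0, …, α_{n−1} ∈ R, and let B = (B_{j,i}) ∈ R^{n×n} satisfy, for all 0 ≤ j, i < n: B_{j,i} ≡ −α_j·sk'_i + p·sk·δ_{j,i} (mod p·q), where δ_{j,i} is 1 if j = i and 0 otherwise, and congruence modulo an integer r means the difference lies in r·R. Suppose a_0, …, a_{n−1}, b_0, …, b_{n−1} ∈ R satisfy a_i·sk + b_i ≡ m_i (mod q) for all i, and suppose a' ∈ R and c_0, …, c_{n−1} ∈ R satisfy p·a' ≡ Σ_{0≤j<n} a_j·α_j (mod p·q) and p·c_i ≡ Σ_{0≤j<n} a_j·B_{j,i} (mod p·q) for all i. Then for every 0 ≤ i < n: a'·sk'_i + (b_i + c_i) ≡ m_i (mod q). -/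

import Mathlib

open Polynomial Finset

/-- `Rq N` is the ring `ℤ[X]/(X^N + 1)`. -/
abbrev Rq (N : ℕ) : Type := AdjoinRoot ((X : ℤ[X]) ^ N + 1)

/-- The image of the indeterminate `X` in `ℤ[X]/(X^N + 1)`. -/
noncomputable def rx (N : ℕ) : Rq N := AdjoinRoot.root _

/-- Exact-arithmetic correctness of the shared-`s` to shared-`a` format
conversion (Algorithm 1). Congruence of `x, y ∈ R = ℤ[X]/(X^N+1)` modulo an
integer `r` (meaning `x - y ∈ r·R`) is expressed as `(r : R) ∣ (x - y)`.
If `B j i ≡ -α_j·sk'_i + p·sk·δ_{j,i} (mod pq)` for all `j, i < n`,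
`a_i·sk + b_i ≡ m_i (mod q)` for all `i < n`,
`p·a' ≡ ∑_j a_j·α_j (mod pq)` and `p·c_i ≡ ∑_j a_j·B_{j,i} (mod pq)`,
then `a'·sk'_i + (b_i + c_i) ≡ m_i (mod q)` for all `i < n`. -/
lemma mymonic (N : ℕ) (hN : 1 ≤ N) : ((X:ℤ[X])^N + 1).Monic :=
  Polynomial.monic_X_pow_add (by simp; omega)

lemma cancel (N p q : ℕ) (hN : 1 ≤ N) (hp : 1 ≤ p) (y : Rq N)
    (h : ((p*q : ℕ) : Rq N) ∣ (p : Rq N) * y) : ((q:ℕ) : Rq N) ∣ y := by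
  haveI : Module.IsTorsionFree ℤ (Rq N) :=
    (AdjoinRoot.powerBasis' (mymonic N hN)).basis.isTorsionFree
  obtain ⟨z, hz⟩ := h
  refine ⟨z, ?_⟩
  have h0 : (p : ℤ) • (y - (q:Rq N)*z) = 0 := by
    rw [zsmul_eq_mul]; push_cast; push_cast at hz; linear_combination hz
  have h1 := (smul_eq_zero.mp h0).resolve_left
    (by exact_mod_cast Nat.one_le_iff_ne_zero.mp hp)
  exact sub_eq_zero.mp h1

theorem stmt13 (N : ℕ) (hN1 : 1 ≤ N) (hN : ∃ κ : ℕ, N = 2 ^ κ)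
    (p q n : ℕ) (hp : 1 ≤ p) (hq : 1 ≤ q) (hn : 1 ≤ n)
    (sk : Rq N) (sk' m a b c α : ℕ → Rq N) (B : ℕ → ℕ → Rq N) (a' : Rq N)
    (hB : ∀ j < n, ∀ i < n,
      ((p * q : ℕ) : Rq N) ∣
        (B j i - (-(α j) * sk' i + (p : Rq N) * sk * (if j = i then 1 else 0))))
    (henc : ∀ i < n, ((q : ℕ) : Rq N) ∣ (a i * sk + b i - m i))
    (ha' : ((p * q : ℕ) : Rq N) ∣
      ((p : Rq N) * a' - ∑ j ∈ Finset.range n, a j * α j))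
    (hc : ∀ i < n, ((p * q : ℕ) : Rq N) ∣
      ((p : Rq N) * c i - ∑ j ∈ Finset.range n, a j * B j i)) :
    ∀ i < n, ((q : ℕ) : Rq N) ∣ (a' * sk' i + (b i + c i) - m i) := by
  intro i hi
  -- key divisibility mod pq
  have hsum : ((p * q : ℕ) : Rq N) ∣
      ∑ j ∈ Finset.range n, a j *
        (B j i - (-(α j) * sk' i + (p : Rq N) * sk * (if j = i then 1 else 0))) :=
    Finset.dvd_sum fun j hj => Dvd.dvd.mul_left (hB j (Finset.mem_range.mp hj) i hi) _
  have hdelta : ∑ j ∈ Finset.range n,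
      a j * ((p : Rq N) * sk * (if j = i then 1 else 0)) = a i * ((p : Rq N) * sk) := by
    rw [Finset.sum_congr rfl (fun j _ => by rw [mul_ite, mul_ite, mul_one, mul_zero, mul_zero])]
    exact Finset.sum_ite_eq' (Finset.range n) i (fun j => a j * ((p : Rq N) * sk)) |>.trans
      (by simp [Finset.mem_range.mpr hi])
  have key : ((p * q : ℕ) : Rq N) ∣ (p : Rq N) * (a' * sk' i + c i - a i * sk) := by
    have h2 := hc i hi
    have h3 := dvd_add (dvd_add (Dvd.dvd.mul_right ha' (sk' i)) h2) hsum
    have e : ∑ j ∈ Finset.range n, a j *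
          (B j i - (-(α j) * sk' i + (p : Rq N) * sk * (if j = i then 1 else 0)))
        = ∑ j ∈ Finset.range n, a j * B j i
          + (∑ j ∈ Finset.range n, a j * α j) * sk' i - a i * ((p : Rq N) * sk) := by
      rw [Finset.sum_congr rfl (fun j _ => by ring : ∀ j ∈ Finset.range n,
        a j * (B j i - (-(α j) * sk' i + (p : Rq N) * sk * (if j = i then 1 else 0)))
        = a j * B j i + a j * α j * sk' i - a j * ((p : Rq N) * sk * (if j = i then 1 else 0)))]
      rw [Finset.sum_sub_distrib, Finset.sum_add_distrib, ← Finset.sum_mul, hdelta]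
    have heq : ((p : Rq N) * a' - ∑ j ∈ Finset.range n, a j * α j) * sk' i
        + ((p : Rq N) * c i - ∑ j ∈ Finset.range n, a j * B j i)
        + ∑ j ∈ Finset.range n, a j *
          (B j i - (-(α j) * sk' i + (p : Rq N) * sk * (if j = i then 1 else 0)))
        = (p : Rq N) * (a' * sk' i + c i - a i * sk) := by
      rw [e]; ring
    rwa [heq] at h3
  have hq1 := cancel N p q hN1 hp _ key
  have h4 := dvd_add hq1 (henc i hi)
  have : a' * sk' i + c i - a i * sk + (a i * sk + b i - m i)
      = a' * sk' i + (b i + c i) - m i := by ring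
  rwa [this] at h4
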